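/- Let $\mu$ be a nonzero finite Borel measure on $S^{n-1}$ that is the surface area measure of some convex body $K$ in $\mathbb{R}^n$. Then $\mu$ is not concentrated on any closed hemisphere: for every $u \in S^{n-1}$, $\mu(\{v \in S^{n-1} : v \cdot u > 0\}) > 0$. -/

import Mathlib

open MeasureTheory

set_option maxHeartbeats 1000000 in
/-- A nonzero surface area measure of a convex body is not concentrated on any closed
hemisphere: `S({v ∈ Sⁿ⁻¹ : v ⋅ u > 0}) > 0` for every unit vector `u`. -/
theorem surface_area_measure_not_concentrated {n : ℕ} (K : Set (EuclideanSpace ℝ (Fin n)))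
    (hconv : Convex ℝ K) (hcomp : IsCompact K) (hint : (interior K).Nonempty)
    (S : Measure (EuclideanSpace ℝ (Fin n)))
    (hS : ∀ η : Set (EuclideanSpace ℝ (Fin n)), MeasurableSet η →
      S η = μH[(n : ℝ) - 1]
        {x ∈ frontier K | ∃ v ∈ η, ‖v‖ = 1 ∧ ∀ y ∈ K, (inner ℝ y v : ℝ) ≤ inner ℝ x v})
    [IsFiniteMeasure S] (hSne : S ≠ 0) :
    ∀ u : EuclideanSpace ℝ (Fin n), ‖u‖ = 1 →
      0 < S {v | ‖v‖ = 1 ∧ 0 < (inner ℝ v u : ℝ)} := by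
  classical
  intro u hu
  have hu0 : u ≠ 0 := by intro h; rw [h, norm_zero] at hu; norm_num at hu
  have hn : n ≠ 0 := by
    rintro rfl
    have : Subsingleton (EuclideanSpace ℝ (Fin 0)) :=
      ⟨fun a b => by ext i; exact i.elim0⟩
    exact hu0 (Subsingleton.elim u 0)
  obtain ⟨m, rfl⟩ : ∃ m, n = m + 1 :=
    ⟨n - 1, (Nat.succ_pred_eq_of_pos (Nat.pos_of_ne_zero hn)).symm⟩
  haveI : Fact (Module.finrank ℝ (EuclideanSpace ℝ (Fin (m + 1))) = m + 1) :=
    ⟨finrank_euclideanSpace_fin⟩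
  -- an orthonormal basis of the hyperplane orthogonal to `u`
  set B : OrthonormalBasis (Fin m) ℝ ((ℝ ∙ u)ᗮ : Submodule ℝ (EuclideanSpace ℝ (Fin (m + 1)))) :=
    OrthonormalBasis.fromOrthogonalSpanSingleton m hu0 with hB
  set b : Fin m → EuclideanSpace ℝ (Fin (m + 1)) := fun i => (B i : EuclideanSpace ℝ (Fin (m + 1))) with hb
  have hb_norm : ∀ i, ‖b i‖ = 1 := fun i => by
    exact B.orthonormal.1 i
  have hb_mem : ∀ i, b i ∈ ((ℝ ∙ u)ᗮ : Submodule ℝ (EuclideanSpace ℝ (Fin (m + 1)))) := fun i => (B i).2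
  have hbu : ∀ i, (inner ℝ (b i) u : ℝ) = 0 := fun i => by
    have := (Submodule.mem_orthogonal _ (b i)).mp (hb_mem i) u
      (Submodule.mem_span_singleton_self u)
    rwa [real_inner_comm] at this
  -- the 1-Lipschitz projection onto coordinates of the hyperplane
  set T : EuclideanSpace ℝ (Fin (m + 1)) →L[ℝ] (Fin m → ℝ) := ContinuousLinearMap.pi (fun i => innerSL ℝ (b i)) with hT
  have hT_apply : ∀ (y : EuclideanSpace ℝ (Fin (m + 1))) (i : Fin m), T y i = (inner ℝ (b i) y : ℝ) := fun y i => rfl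
  have hT_lip : LipschitzWith 1 T := by
    apply LipschitzWith.of_dist_le_mul
    intro y z
    rw [NNReal.coe_one, one_mul, dist_pi_le_iff dist_nonneg]
    intro i
    rw [hT_apply, hT_apply, Real.dist_eq, ← inner_sub_right, dist_eq_norm]
    calc |(inner ℝ (b i) (y - z) : ℝ)| ≤ ‖b i‖ * ‖y - z‖ := abs_real_inner_le_norm _ _
      _ = ‖y - z‖ := by rw [hb_norm i, one_mul]
  have hT_surj : Function.Surjective T := by
    intro c
    refine ⟨∑ i, c i • b i, ?_⟩
    funext j
    rw [hT_apply, inner_sum]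
    have horth : ∀ i j : Fin m, (inner ℝ (b i) (b j) : ℝ) = if i = j then 1 else 0 := by
      intro i j
      have := orthonormal_iff_ite.mp B.orthonormal i j
      simpa [hb, Submodule.coe_inner] using this
    have hsum : ∀ i ∈ Finset.univ, (inner ℝ (b j) (c i • b i) : ℝ) = if j = i then c i else 0 := by
      intro i _
      rw [real_inner_smul_right, horth j i]
      by_cases h : j = i <;> simp [h]
    rw [Finset.sum_congr rfl hsum, Finset.sum_ite_eq]
    simp
  -- the exit time and exit point in direction u
  obtain ⟨R, hR⟩ := hcomp.isBounded.exists_norm_le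
  set τ : EuclideanSpace ℝ (Fin (m + 1)) → ℝ :=
    fun x => sSup {t : ℝ | x + t • u ∈ K} with hτ
  set e : EuclideanSpace ℝ (Fin (m + 1)) → EuclideanSpace ℝ (Fin (m + 1)) :=
    fun x => x + τ x • u with he
  -- properties of the exit point for interior points
  have hexit : ∀ x ∈ interior K, e x ∈ frontier K ∧ 0 ≤ τ x ∧ T (e x) = T x := by
    intro x hx
    have hxK : x ∈ K := interior_subset hx
    set Sx : Set ℝ := {t : ℝ | x + t • u ∈ K} with hSx
    have h0 : (0 : ℝ) ∈ Sx := by simp [hSx, hxK]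
    have hbdd : BddAbove Sx := by
      refine ⟨R + ‖x‖, fun t ht => ?_⟩
      have h1 : ‖x + t • u‖ ≤ R := hR _ ht
      calc t ≤ |t| := le_abs_self t
        _ = ‖t • u‖ := by rw [norm_smul, hu, mul_one, Real.norm_eq_abs]
        _ = ‖(x + t • u) - x‖ := by rw [add_sub_cancel_left]
        _ ≤ ‖x + t • u‖ + ‖x‖ := norm_sub_le _ _
        _ ≤ R + ‖x‖ := by linarith
    have hclosed : IsClosed Sx := by
      have : Sx = (fun t : ℝ => x + t • u) ⁻¹' K := rfl
      rw [this]
      exact hcomp.isClosed.preimage (by continuity)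
    have hmem : τ x ∈ Sx := hclosed.csSup_mem ⟨0, h0⟩ hbdd
    have hτ0 : 0 ≤ τ x := le_csSup hbdd h0
    have heK : e x ∈ K := hmem
    have hnotint : e x ∉ interior K := by
      intro hint'
      obtain ⟨ε, hε, hball⟩ := Metric.mem_nhds_iff.mp (mem_interior_iff_mem_nhds.mp hint')
      have : τ x + ε / 2 ∈ Sx := by
        have : x + (τ x + ε / 2) • u = e x + (ε / 2) • u := by
          simp [he, add_smul]; abel
        rw [hSx]
        show x + (τ x + ε / 2) • u ∈ K
        rw [this]
        apply hball
        rw [Metric.mem_ball, dist_eq_norm]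
        simp only [add_sub_cancel_left, norm_smul, hu, mul_one, Real.norm_eq_abs]
        rw [abs_of_pos (by linarith)]
        linarith
      have := le_csSup hbdd this
      linarith
    refine ⟨?_, hτ0, ?_⟩
    · rw [hcomp.isClosed.frontier_eq]
      exact ⟨heK, hnotint⟩
    · funext i
      rw [hT_apply, hT_apply, he]
      simp only [inner_add_right, real_inner_smul_right, hbu i, mul_zero, add_zero]
  -- every exit point of an interior point is in the "good" boundary set
  set η : Set (EuclideanSpace ℝ (Fin (m + 1))) := {v | ‖v‖ = 1 ∧ 0 < (inner ℝ v u : ℝ)} with hη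
  set A : Set (EuclideanSpace ℝ (Fin (m + 1))) :=
    {x ∈ frontier K | ∃ v ∈ η, ‖v‖ = 1 ∧ ∀ y ∈ K, (inner ℝ y v : ℝ) ≤ inner ℝ x v} with hA
  have hmemA : ∀ x ∈ interior K, e x ∈ A := by
    intro x hx
    obtain ⟨hfr, hτ0, -⟩ := hexit x hx
    -- separating functional
    have hnotint : e x ∉ interior K := by
      rw [hcomp.isClosed.frontier_eq] at hfr; exact hfr.2
    obtain ⟨f, hf⟩ := geometric_hahn_banach_open_point hconv.interior isOpen_interior hnotint
    set w : EuclideanSpace ℝ (Fin (m + 1)) :=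
      (InnerProductSpace.toDual ℝ (EuclideanSpace ℝ (Fin (m + 1)))).symm f with hw
    have hwapp : ∀ y : EuclideanSpace ℝ (Fin (m + 1)), (inner ℝ w y : ℝ) = f y := fun y =>
      InnerProductSpace.toDual_symm_apply
    have hw0 : w ≠ 0 := by
      intro h
      have := hf x hx
      rw [← hwapp x, ← hwapp (e x), h] at this
      simp at this
    -- f y ≤ f (e x) for all y ∈ K
    have hfK : ∀ y ∈ K, f y ≤ f (e x) := by
      intro y hy
      have key : ∀ t ∈ Set.Ioc (0 : ℝ) 1, f (y + t • (x - y)) < f (e x) := by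
        intro t ht
        exact hf _ (hconv.add_smul_sub_mem_interior hy hx ht)
      have tends : Filter.Tendsto (fun t : ℝ => f (y + t • (x - y))) (nhdsWithin 0 (Set.Ioi 0))
          (nhds (f y)) := by
        have hc : Continuous (fun t : ℝ => f (y + t • (x - y))) := by continuity
        have := hc.tendsto 0
        simp only [zero_smul, add_zero] at this
        exact this.mono_left nhdsWithin_le_nhds
      refine le_of_tendsto tends ?_
      filter_upwards [Ioc_mem_nhdsGT one_pos] with t ht
      exact (key t ht).le
    -- inner ℝ product with u is positive
    have hτpos : 0 < τ x * (inner ℝ w u : ℝ) := by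
      obtain ⟨ε, hε, hball⟩ := Metric.mem_nhds_iff.mp (mem_interior_iff_mem_nhds.mp hx)
      set s : ℝ := ε / (2 * ‖w‖) with hs
      have hwn : 0 < ‖w‖ := norm_pos_iff.mpr hw0
      have hspos : 0 < s := by positivity
      have hyK : x + s • w ∈ K := by
        apply hball
        rw [Metric.mem_ball, dist_eq_norm]
        simp only [add_sub_cancel_left, norm_smul, Real.norm_eq_abs, abs_of_pos hspos]
        rw [hs, div_mul_eq_mul_div, div_lt_iff₀ (by positivity)]
        nlinarith
      have h1 : f (x + s • w) ≤ f (e x) := hfK _ hyK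
      rw [← hwapp, ← hwapp] at h1
      simp only [he, inner_add_right, real_inner_smul_right, real_inner_self_eq_norm_sq] at h1
      have hpos2 : 0 < s * ‖w‖ ^ 2 := by positivity
      linarith
    have hwu : 0 < (inner ℝ w u : ℝ) := by
      rcases lt_or_ge 0 (inner ℝ w u : ℝ) with h | h
      · exact h
      · exfalso
        have : τ x * (inner ℝ w u : ℝ) ≤ 0 := mul_nonpos_of_nonneg_of_nonpos hτ0 h
        linarith
    set v : EuclideanSpace ℝ (Fin (m + 1)) := ‖w‖⁻¹ • w with hv
    have hvn : ‖v‖ = 1 := by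
      rw [hv, norm_smul, norm_inv, norm_norm, inv_mul_cancel₀ (norm_ne_zero_iff.mpr hw0)]
    have hvu : 0 < (inner ℝ v u : ℝ) := by
      rw [hv, real_inner_smul_left]
      have : 0 < ‖w‖⁻¹ := inv_pos.mpr (norm_pos_iff.mpr hw0)
      positivity
    refine ⟨hfr, v, ⟨hvn, hvu⟩, hvn, fun y hy => ?_⟩
    have h2 := hfK y hy
    rw [← hwapp, ← hwapp] at h2
    rw [hv, real_inner_smul_right, real_inner_smul_right, real_inner_comm w y,
      real_inner_comm w (e x)]
    exact mul_le_mul_of_nonneg_left h2 (inv_nonneg.mpr (norm_nonneg _))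
  -- measurability of η
  have hη_meas : MeasurableSet η := by
    have h1 : MeasurableSet {v : EuclideanSpace ℝ (Fin (m + 1)) | ‖v‖ = 1} :=
      (isClosed_eq continuous_norm continuous_const).measurableSet
    have h2 : MeasurableSet {v : EuclideanSpace ℝ (Fin (m + 1)) | 0 < (inner ℝ v u : ℝ)} := by
      apply (isOpen_lt continuous_const ?_).measurableSet
      exact Continuous.inner continuous_id continuous_const
    exact h1.inter h2
  -- the measure computation
  have hSA : S η = μH[((m + 1 : ℕ) : ℝ) - 1] A := hS η hη_meas
  have hcast : ((m + 1 : ℕ) : ℝ) - 1 = (m : ℝ) := by push_cast; ring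
  rw [hcast] at hSA
  -- positivity chain
  have himg : T '' interior K ⊆ T '' A := by
    rintro _ ⟨x, hx, rfl⟩
    obtain ⟨-, -, hTe⟩ := hexit x hx
    exact ⟨e x, hmemA x hx, hTe⟩
  have hopen : IsOpen (T '' interior K) := T.isOpenMap hT_surj _ isOpen_interior
  have hpos : 0 < volume (T '' interior K) :=
    hopen.measure_pos volume (hint.image T)
  have hvol : (volume : Measure (Fin m → ℝ)) = μH[(m : ℝ)] := by
    rw [← hausdorffMeasure_pi_real (ι := Fin m)]
    norm_num
  have hchain : volume (T '' A) ≤ μH[(m : ℝ)] A := by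
    rw [hvol]
    have := hT_lip.hausdorffMeasure_image_le (d := (m : ℝ)) (by positivity) A
    simpa using this
  have : 0 < μH[(m : ℝ)] A :=
    lt_of_lt_of_le (lt_of_lt_of_le hpos (measure_mono himg)) hchain
  rw [hη] at hSA
  exact hSA ▸ this
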